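/- Let (m_{n,k})_{1≤k≤n} be a martingale difference array adapted to filtrations (F_{n,k}) and suppose for some ν > 0 and constant C, E[(m_{n,k})² 1{|m_{n,k}| > ε√n} | F_{n,k−1}] ≤ T_{n,k−1} · C · (T_{n,k−1}/n)^{ν/(2+ν)} / ε^{2ν/(2+ν)} for nonnegative F_{n,k−1}-measurable T_{n,k−1}. If (1/n)∑_{k=1}^n T_{n,k−1} converges in probability to a finite limit and max_k T_{n,k−1}/n → 0 in probability, then the Lindeberg condition (1/n)∑_{k=1}^n E[(m_{n,k})² 1{|m_{n,k}| > ε√n} | F_{n,k−1}] → 0 in probability holds for every ε > 0. -/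

import Mathlib

open MeasureTheory Finset Filter

theorem lindeberg_condition_from_bound
    {Ω : Type*} [MeasurableSpace Ω] (μ : Measure Ω) [IsProbabilityMeasure μ]
    (ν C : ℝ) (hν : 0 < ν) (hC : 0 < C)
    (T : ℕ → ℕ → Ω → ℝ) (hT : ∀ n k ω, 0 ≤ T n k ω)
    -- L n k ε is the conditional expectation E[(m_{n,k})² 1{|m_{n,k}| > ε√n} | F_{n,k-1}]
    (L : ℕ → ℕ → ℝ → Ω → ℝ) (hL : ∀ n k ε ω, 0 ≤ L n k ε ω)
    (hmeas : ∀ n k ε, Measurable (L n k ε)) (hTmeas : ∀ n k, Measurable (T n k))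
    (hbound : ∀ n k (ε : ℝ), 0 < ε → ∀ ω,
      L n k ε ω ≤ T n k ω * C * (T n k ω / n) ^ (ν / (2 + ν)) / ε ^ (2 * ν / (2 + ν)))
    (ℓlim : ℝ)
    (hTavg : TendstoInMeasure μ
      (fun (n : ℕ) ω => (n : ℝ)⁻¹ * ∑ k ∈ Finset.range n, T n k ω) atTop (fun _ => ℓlim))
    (hTmax : ∀ δ : ℝ, 0 < δ →
      Tendsto (fun n => μ {ω | ∃ k < n, T n k ω / n > δ}) atTop (nhds 0)) :
    ∀ ε : ℝ, 0 < ε →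
      TendstoInMeasure μ
        (fun (n : ℕ) ω => (n : ℝ)⁻¹ * ∑ k ∈ Finset.range n, L n k ε ω) atTop (fun _ => 0) := by
  intro ε hε
  have h2ν : (0:ℝ) < 2 + ν := by linarith
  have hθ : 0 < ν / (2 + ν) := div_pos hν h2ν
  have hεp : 0 < ε ^ (2 * ν / (2 + ν)) := Real.rpow_pos_of_pos hε _
  rw [tendstoInMeasure_iff_dist]
  intro η hη
  set M : ℝ := |ℓlim| + 1 with hMdef
  have hM : 0 < M := by positivity
  set A : ℝ := η * ε ^ (2 * ν / (2 + ν)) / (2 * (M * C)) with hAdef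
  have hA : 0 < A := by positivity
  set δ : ℝ := A ^ (ν / (2 + ν))⁻¹ with hδdef
  have hδ : 0 < δ := Real.rpow_pos_of_pos hA _
  have hδθ : δ ^ (ν / (2 + ν)) = A := Real.rpow_inv_rpow hA.le hθ.ne'
  have incl : ∀ n : ℕ,
      {ω | η ≤ dist ((n:ℝ)⁻¹ * ∑ k ∈ Finset.range n, L n k ε ω) 0}
      ⊆ {ω | ∃ k < n, T n k ω / n > δ}
        ∪ {ω | 1 ≤ dist ((n:ℝ)⁻¹ * ∑ k ∈ Finset.range n, T n k ω) ℓlim} := by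
    intro n ω hω
    simp only [Set.mem_setOf_eq, Real.dist_eq, sub_zero] at hω
    rw [Set.mem_union]
    by_contra hcon
    push_neg at hcon
    obtain ⟨h1, h2⟩ := hcon
    simp only [Set.mem_setOf_eq] at h1 h2
    push_neg at h1 h2
    rw [Real.dist_eq] at h2
    have havg : (n:ℝ)⁻¹ * ∑ k ∈ Finset.range n, T n k ω ≤ M := by
      have := (abs_lt.mp h2).2
      have := le_abs_self ℓlim
      rw [hMdef]; linarith
    have hSnn : 0 ≤ (n:ℝ)⁻¹ * ∑ k ∈ Finset.range n, L n k ε ω :=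
      mul_nonneg (by positivity) (Finset.sum_nonneg fun k _ => hL n k ε ω)
    rw [abs_of_nonneg hSnn] at hω
    have hsum : ∑ k ∈ Finset.range n, L n k ε ω
        ≤ ∑ k ∈ Finset.range n,
            T n k ω * (C * δ ^ (ν / (2 + ν)) / ε ^ (2 * ν / (2 + ν))) := by
      apply Finset.sum_le_sum
      intro k hk
      have hb := hbound n k ε hε ω
      have hr : (T n k ω / n) ^ (ν / (2 + ν)) ≤ δ ^ (ν / (2 + ν)) :=
        Real.rpow_le_rpow (div_nonneg (hT n k ω) (Nat.cast_nonneg n))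
          (h1 k (Finset.mem_range.mp hk)) hθ.le
      calc L n k ε ω ≤ T n k ω * C * (T n k ω / n) ^ (ν / (2 + ν))
            / ε ^ (2 * ν / (2 + ν)) := hb
        _ ≤ T n k ω * C * δ ^ (ν / (2 + ν)) / ε ^ (2 * ν / (2 + ν)) := by
            gcongr
            exact mul_nonneg (hT n k ω) hC.le
        _ = T n k ω * (C * δ ^ (ν / (2 + ν)) / ε ^ (2 * ν / (2 + ν))) := by ring
    have hS : (n:ℝ)⁻¹ * ∑ k ∈ Finset.range n, L n k ε ω ≤ η / 2 := by
      have hc : 0 ≤ C * δ ^ (ν / (2 + ν)) / ε ^ (2 * ν / (2 + ν)) := by positivity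
      calc (n:ℝ)⁻¹ * ∑ k ∈ Finset.range n, L n k ε ω
          ≤ (n:ℝ)⁻¹ * ∑ k ∈ Finset.range n,
              T n k ω * (C * δ ^ (ν / (2 + ν)) / ε ^ (2 * ν / (2 + ν))) := by
            apply mul_le_mul_of_nonneg_left hsum (by positivity)
        _ = ((n:ℝ)⁻¹ * ∑ k ∈ Finset.range n, T n k ω)
              * (C * δ ^ (ν / (2 + ν)) / ε ^ (2 * ν / (2 + ν))) := by
            rw [← Finset.sum_mul]; ring
        _ ≤ M * (C * δ ^ (ν / (2 + ν)) / ε ^ (2 * ν / (2 + ν))) :=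
            mul_le_mul_of_nonneg_right havg hc
        _ = η / 2 := by
            rw [hδθ, hAdef]
            field_simp
    linarith
  have h1 := hTmax δ hδ
  have h2 := tendstoInMeasure_iff_dist.mp hTavg 1 one_pos
  have hsum2 := h1.add h2
  rw [add_zero] at hsum2
  refine tendsto_of_tendsto_of_tendsto_of_le_of_le tendsto_const_nhds hsum2
    (fun n => zero_le) (fun n => ?_)
  exact (measure_mono (incl n)).trans (measure_union_le _ _)
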